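/- The element (1/p)(1 + α + α² + ⋯ + α^{p−1}) is an algebraic integer, i.e., it lies in O_L. -/

import Mathlib

open NumberField

/-- A prime number `p` is unramified in the number field `K` if no prime ideal of `𝓞 K`
lying above `p` is ramified over `ℚ`. -/
def IsUnramifiedIn (K : Type*) [Field K] (p : ℕ) : Prop :=
  ∀ P : Ideal (𝓞 K), P.IsPrime → (p : 𝓞 K) ∈ P →
    Ideal.ramificationIdx' (Ideal.span {(p : ℤ)}) P = 1

/-- An extension `M/N` of number fields is (at most) tamely ramified if for every nonzero
prime ideal `P` of `𝓞 M` the ramification index of `P` over `N` is coprime to the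
characteristic of the residue field of `P`. -/
def IsTamelyRamified (N M : Type*) [Field N] [Field M] [Algebra N M] : Prop :=
  ∀ P : Ideal (𝓞 M), P.IsPrime → P ≠ ⊥ →
    ∀ q : ℕ, q.Prime → (q : 𝓞 M) ∈ P →
      Nat.Coprime
        (Ideal.ramificationIdx'
          (P.comap (algebraMap (𝓞 N) (𝓞 M))) P) q

open Polynomial in
private theorem key_lemma_aux (p : ℕ) (hp : p.Prime) (A μ : ℂ) (hμ : μ ≠ 0)
    (hap : A ^ p = 1 + (p:ℂ)^2 * μ) (hμint : IsIntegral ℤ μ) :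
    IsIntegral ℤ ((p:ℂ)⁻¹ * ∑ k ∈ Finset.range p, A ^ k) := by
  have hp1 : 1 ≤ p := hp.pos
  have hp0 : (p:ℂ) ≠ 0 := Nat.cast_ne_zero.2 hp.pos.ne'
  set θ : ℂ := (p:ℂ)⁻¹ * ∑ k ∈ Finset.range p, A ^ k with hθdef
  have hkey : θ * (A - 1) = (p:ℂ) * μ := by
    rw [hθdef, mul_assoc, geom_sum_mul, hap]
    field_simp
    ring
  have hAθ : θ + (p:ℂ) * μ = θ * A := by rw [← hkey]; ring
  have hmain : (1 + (p:ℂ)^2*μ) * θ ^ p = (θ + (p:ℂ)*μ) ^ p := by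
    rw [hAθ, mul_pow θ A, hap]; ring
  have hexp : (θ + (p:ℂ)*μ) ^ p
      = θ^p + (p:ℂ)^2*μ*θ^(p-1)
        + ∑ k ∈ Finset.range (p-1), θ^k * ((p:ℂ)*μ)^(p-k) * (p.choose k) := by
    rw [add_pow]
    have h1 : p + 1 = (p - 1) + 1 + 1 := by omega
    rw [h1, Finset.sum_range_succ, Finset.sum_range_succ]
    have h2 : p - 1 + 1 = p := by omega
    rw [h2]
    have h3 : p - (p-1) = 1 := by omega
    rw [h3, Nat.sub_self, Nat.choose_self, Nat.choose_symm hp1, Nat.choose_one_right]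
    ring
  have hsub : (p:ℂ)^2*μ*θ^p = (p:ℂ)^2*μ*θ^(p-1)
      + ∑ k ∈ Finset.range (p-1), θ^k * ((p:ℂ)*μ)^(p-k) * (p.choose k) := by
    linear_combination hmain + hexp
  have hE : θ^p = θ^(p-1)
      + ∑ k ∈ Finset.range (p-1), θ^k * ((p:ℂ)^(p-2-k) * μ^(p-1-k)) * (p.choose k) := by
    have hne : (p:ℂ)^2*μ ≠ 0 := mul_ne_zero (pow_ne_zero _ hp0) hμ
    apply mul_left_cancel₀ hne
    rw [hsub, mul_add, Finset.mul_sum]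
    congr 1
    apply Finset.sum_congr rfl
    intro k hk
    have hk' : k < p - 1 := Finset.mem_range.1 hk
    have e1 : p - k = (p - 2 - k) + 2 := by omega
    have e3 : p - 1 - k = (p - 2 - k) + 1 := by omega
    rw [e1, e3, pow_add, pow_add, mul_pow, mul_pow]
    ring
  -- now build the monic polynomial over the integral closure
  set R := integralClosure ℤ ℂ
  have hc : ∀ k : ℕ, IsIntegral ℤ (((p:ℂ)^(p-2-k) * μ^(p-1-k)) * (p.choose k)) := by
    intro k
    have h1 : IsIntegral ℤ ((p:ℂ)) := by
      have := isIntegral_algebraMap (R := ℤ) (A := ℂ) (x := (p:ℤ))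
      simpa using this
    have h2 : IsIntegral ℤ ((p.choose k : ℂ)) := by
      have := isIntegral_algebraMap (R := ℤ) (A := ℂ) (x := (p.choose k:ℤ))
      simpa using this
    exact ((h1.pow _).mul (hμint.pow _)).mul h2
  have hθR : IsIntegral R θ := by
    refine ⟨X^p - (X^(p-1) + ∑ k ∈ Finset.range (p-1),
      C (⟨((p:ℂ)^(p-2-k) * μ^(p-1-k)) * (p.choose k), hc k⟩ : R) * X^k), ?_, ?_⟩
    · apply Polynomial.monic_X_pow_sub
      have hd1 : (X^(p-1) : Polynomial R).degree ≤ ((p-1 : ℕ) : WithBot ℕ) := by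
        simp
      have hd2 : (∑ k ∈ Finset.range (p-1),
          C (⟨((p:ℂ)^(p-2-k) * μ^(p-1-k)) * (p.choose k), hc k⟩ : R) * X^k).degree
          ≤ ((p-1 : ℕ) : WithBot ℕ) := by
        refine le_trans (Polynomial.degree_sum_le _ _) ?_
        apply Finset.sup_le
        intro k hk
        refine le_trans (Polynomial.degree_C_mul_X_pow_le _ _) ?_
        have hkp := Finset.mem_range.1 hk
        exact_mod_cast (by omega : k ≤ p-1)
      calc (X^(p-1) + ∑ k ∈ Finset.range (p-1),
          C (⟨((p:ℂ)^(p-2-k) * μ^(p-1-k)) * (p.choose k), hc k⟩ : R) * X^k).degree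
          ≤ ((p-1:ℕ) : WithBot ℕ) := le_trans (Polynomial.degree_add_le _ _) (max_le hd1 hd2)
        _ < (p : WithBot ℕ) := by exact_mod_cast (by omega : p-1 < p)
    · simp only [eval₂_sub, eval₂_add, eval₂_pow, eval₂_X, eval₂_finset_sum, eval₂_mul,
        eval₂_C]
      rw [sub_eq_zero, hE]
      congr 1
      refine Finset.sum_congr rfl fun k _ => ?_
      show θ ^ k * (((p:ℂ)) ^ (p - 2 - k) * μ ^ (p - 1 - k)) * ((p.choose k : ℂ))
        = ((p:ℂ) ^ (p - 2 - k) * μ ^ (p - 1 - k) * (p.choose k : ℂ)) * θ ^ k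
      ring
  exact isIntegral_trans θ hθR

-- **Statement 7.**
set_option maxHeartbeats 1000000 in
theorem trace_element_is_integral
    (p : ℕ) (hp : p.Prime) (K : IntermediateField ℚ ℂ) [NumberField K]
    (hunr : IsUnramifiedIn K p)
    (ζ : ℂ) (hζ : IsPrimitiveRoot ζ p) (hζK : ζ ∉ K)
    (ω : ℂ) (hωK : ω ^ p ∈ K) (hωnp : ¬∃ x ∈ K, x ^ p = ω ^ p)
    (L : IntermediateField K ℂ) (hL : L = IntermediateField.adjoin K {ω})
    (htame : IsTamelyRamified K L)
    (α : 𝓞 L) (hαgen : IntermediateField.adjoin K {((α : L) : ℂ)} = L)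
    (a : 𝓞 K) (ha : algebraMap (𝓞 K) (𝓞 L) a = α ^ p)
    (hcong : ∃ m : 𝓞 K, a - 1 = (p : 𝓞 K) ^ 2 * m) :
    ((p : ℂ)⁻¹ * ∑ k ∈ Finset.range p, ((α : L) : ℂ) ^ k) ∈ L ∧
      IsIntegral ℤ ((p : ℂ)⁻¹ * ∑ k ∈ Finset.range p, ((α : L) : ℂ) ^ k) := by
  have hp0 : (p:ℂ) ≠ 0 := Nat.cast_ne_zero.2 hp.pos.ne'
  set A : ℂ := ((α : L) : ℂ) with hAdef
  obtain ⟨m, hm⟩ := hcong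
  set μ : ℂ := ((m : K) : ℂ) with hμdef
  have hμint : IsIntegral ℤ μ := map_isIntegral_int K.val (RingOfIntegers.isIntegral_coe m)
  -- A^p = image of a
  let g : 𝓞 L →+* ℂ := (algebraMap L ℂ).comp (algebraMap (𝓞 L) L)
  have hgα : g α = A := rfl
  have h1 : A ^ p = ((a : K) : ℂ) := by
    have e1 : g (algebraMap (𝓞 K) (𝓞 L) a) = ((a : K) : ℂ) := rfl
    rw [← e1, ha, g.map_pow, hgα]
  let f : 𝓞 K →+* ℂ := (algebraMap K ℂ).comp (algebraMap (𝓞 K) K)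
  have hfm : f m = μ := rfl
  have hfa : f a = ((a : K) : ℂ) := rfl
  have h2 : ((a : K) : ℂ) = 1 + (p:ℂ)^2 * μ := by
    have hm' : a = 1 + (p : 𝓞 K)^2 * m := by linear_combination hm
    rw [← hfa, hm', f.map_add, f.map_one, f.map_mul, f.map_pow, map_natCast f p, hfm]
  constructor
  · exact mul_mem (L.inv_mem (IntermediateField.natCast_mem L p))
      (sum_mem fun k _ => pow_mem (SetLike.coe_mem (α : L)) k)
  · by_cases hμ : μ = 0
    · -- a = 1, so A^p = 1
      have hap1 : A ^ p = 1 := by rw [h1, h2, hμ]; ring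
      by_cases hA : A = 1
      · have : ∑ k ∈ Finset.range p, A ^ k = (p : ℂ) := by
          simp [hA]
        rw [this, inv_mul_cancel₀ hp0]
        exact isIntegral_one
      · have hs : ∑ k ∈ Finset.range p, A ^ k = 0 := by
          have h := geom_sum_mul A p
          rw [hap1, sub_self] at h
          rcases mul_eq_zero.1 h with h' | h'
          · exact h'
          · exact absurd (sub_eq_zero.1 h') hA
        rw [hs, mul_zero]
        exact isIntegral_zero
    · exact key_lemma_aux p hp A μ hμ (by rw [h1, h2]) hμint
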